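/- Let m ≥ 1 be an integer and δ₀ > -m, and let p_k(δ₀) be the limiting degree distribution of the preferential attachment model. Then the mean of the distribution equals 2m, i.e., ∑_{k=m}^∞ k·p_k(δ₀) = 2m; equivalently ∑_{k=m}^∞ (k+δ₀)·p_k(δ₀) = 2m+δ₀. -/

import Mathlib

open Filter Finset Real

lemma gamma_key (a b : ℝ) (ha : 0 < a) (hab : a + 1 < b) :
    HasSum (fun j : ℕ => Real.Gamma (a + j) / Real.Gamma (b + j + 1))
      (Real.Gamma a / Real.Gamma b / (b - a)) ∧
    HasSum (fun j : ℕ => (a + j) * (Real.Gamma (a + j) / Real.Gamma (b + j + 1)))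
      (a * Real.Gamma a / Real.Gamma b / (b - a - 1)) := by
  have hb : 0 < b := by linarith
  have hba : (0:ℝ) < b - a := by linarith
  have hba1 : (0:ℝ) < b - a - 1 := by linarith
  set f : ℕ → ℝ := fun j => Real.Gamma (a + j) / Real.Gamma (b + j + 1) with hfdef
  set u : ℕ → ℝ := fun j => (a + j) * f j with hudef
  set g : ℕ → ℝ := fun j => Real.Gamma (a + j) / Real.Gamma (b + j) with hgdef
  set h : ℕ → ℝ := fun j => Real.Gamma (a + j + 1) / Real.Gamma (b + j) with hhdef
  have haj : ∀ j : ℕ, (0:ℝ) < a + j := fun j => by positivity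
  have hbj : ∀ j : ℕ, (0:ℝ) < b + j := fun j => by positivity
  have hΓa : ∀ j : ℕ, 0 < Real.Gamma (a + j) := fun j => Real.Gamma_pos_of_pos (haj j)
  have hΓb : ∀ j : ℕ, 0 < Real.Gamma (b + j) := fun j => Real.Gamma_pos_of_pos (hbj j)
  have hΓb1 : ∀ j : ℕ, 0 < Real.Gamma (b + j + 1) := fun j =>
    Real.Gamma_pos_of_pos (by linarith [hbj j])
  have hfpos : ∀ j, 0 < f j := fun j => div_pos (hΓa j) (hΓb1 j)
  have hupos : ∀ j, 0 < u j := fun j => mul_pos (haj j) (hfpos j)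
  have hgpos : ∀ j, 0 < g j := fun j => div_pos (hΓa j) (hΓb j)
  have hhpos : ∀ j, 0 < h j := fun j => div_pos (Real.Gamma_pos_of_pos (by linarith [haj j])) (hΓb j)
  have hΓa1 : ∀ j : ℕ, Real.Gamma (a + j + 1) = (a + j) * Real.Gamma (a + j) :=
    fun j => Real.Gamma_add_one (ne_of_gt (haj j))
  have hΓbrec : ∀ j : ℕ, Real.Gamma (b + j + 1) = (b + j) * Real.Gamma (b + j) :=
    fun j => Real.Gamma_add_one (ne_of_gt (hbj j))
  have hag : ∀ j : ℕ, h j = (a + j) * g j := by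
    intro j
    simp only [hhdef, hgdef, hΓa1 j, mul_div_assoc]
  -- telescoping identities
  have tg : ∀ j : ℕ, g j - g (j+1) = (b - a) * f j := by
    intro j
    have e1 : a + ((j:ℝ) + 1) = a + j + 1 := by ring
    have e2 : b + ((j:ℝ) + 1) = b + j + 1 := by ring
    simp only [hgdef, hfdef, Nat.cast_add, Nat.cast_one, e1, e2, hΓa1 j, hΓbrec j]
    have h1 := (hΓb j).ne'
    have h2 := (hbj j).ne'
    field_simp
    ring
  have th : ∀ j : ℕ, h j - h (j+1) = (b - a - 1) * u j := by
    intro j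
    have e1 : a + ((j:ℝ) + 1) + 1 = (a + j + 1) + 1 := by ring
    have e2 : b + ((j:ℝ) + 1) = b + j + 1 := by ring
    have hA : Real.Gamma ((a + j + 1) + 1) = (a + j + 1) * ((a + j) * Real.Gamma (a + j)) := by
      rw [Real.Gamma_add_one (by positivity : a + (j:ℝ) + 1 ≠ 0), hΓa1 j]
    simp only [hhdef, hudef, hfdef, Nat.cast_add, Nat.cast_one, e1, e2, hA, hΓa1 j, hΓbrec j]
    have h1 := (hΓb j).ne'
    have h2 := (hbj j).ne'
    field_simp
    ring
  -- partial sums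
  have psf : ∀ N : ℕ, (b - a) * ∑ j ∈ Finset.range N, f j = g 0 - g N := by
    intro N
    rw [Finset.mul_sum]
    calc ∑ j ∈ Finset.range N, (b - a) * f j
        = ∑ j ∈ Finset.range N, (g j - g (j+1)) :=
          Finset.sum_congr rfl fun j _ => (tg j).symm
      _ = g 0 - g N := Finset.sum_range_sub' g N
  have psu : ∀ N : ℕ, (b - a - 1) * ∑ j ∈ Finset.range N, u j = h 0 - h N := by
    intro N
    rw [Finset.mul_sum]
    calc ∑ j ∈ Finset.range N, (b - a - 1) * u j
        = ∑ j ∈ Finset.range N, (h j - h (j+1)) :=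
          Finset.sum_congr rfl fun j _ => (th j).symm
      _ = h 0 - h N := Finset.sum_range_sub' h N
  -- h is bounded by h 0
  have hanti : ∀ j, h j ≤ h 0 := by
    intro j
    have h1 : 0 ≤ ∑ i ∈ Finset.range j, u i := Finset.sum_nonneg fun i _ => (hupos i).le
    have h2 := psu j
    nlinarith
  -- g tends to 0
  have htend_aj : Tendsto (fun j : ℕ => a + (j:ℝ)) atTop atTop :=
    tendsto_atTop_add_const_left _ _ tendsto_natCast_atTop_atTop
  have hub : ∀ j : ℕ, g j ≤ h 0 / (a + (j:ℝ)) := by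
    intro j
    rw [le_div_iff₀ (haj j)]
    have := hag j ▸ hanti j
    nlinarith [hgpos j]
  have hg0 : Tendsto g atTop (nhds 0) := by
    exact squeeze_zero (fun j => (hgpos j).le) hub (tendsto_const_nhds.div_atTop htend_aj)
  -- summability
  have hsumf : Summable f := by
    apply summable_of_sum_range_le (fun j => (hfpos j).le) (c := g 0 / (b - a))
    intro N
    rw [le_div_iff₀ hba]
    nlinarith [psf N, (hgpos N).le]
  have hsumu : Summable u := by
    apply summable_of_sum_range_le (fun j => (hupos j).le) (c := h 0 / (b - a - 1))
    intro N
    rw [le_div_iff₀ hba1]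
    nlinarith [psu N, (hhpos N).le]
  -- HasSum for f
  have psf' : ∀ N, ∑ j ∈ Finset.range N, f j = (g 0 - g N) / (b - a) := by
    intro N
    rw [eq_div_iff hba.ne']
    linear_combination psf N
  have hasf : HasSum f (g 0 / (b - a)) := by
    rw [hsumf.hasSum_iff_tendsto_nat]
    have ht : Tendsto (fun N => (g 0 - g N) / (b - a)) atTop (nhds ((g 0 - 0) / (b - a))) :=
      (tendsto_const_nhds.sub hg0).div_const _
    rw [sub_zero] at ht
    exact ht.congr fun N => (psf' N).symm
  -- tail sums of f
  have tailf : ∀ j : ℕ, ∑' i : ℕ, f (i + j) = g j / (b - a) := by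
    intro j
    have h1 := Summable.sum_add_tsum_nat_add (f := f) j hsumf
    rw [hasf.tsum_eq, psf' j] at h1
    have h2 : (g 0 - g j) / (b - a) + ∑' i : ℕ, f (i + j) = g 0 / (b - a) := h1
    field_simp at h2 ⊢
    linarith
  -- h tends to 0
  have key : ∀ j : ℕ, h j ≤ (b - a) * ∑' i : ℕ, u (i + j) := by
    intro j
    have hshift : Summable (fun i : ℕ => f (i + j)) := (summable_nat_add_iff j).2 hsumf
    have hshiftu : Summable (fun i : ℕ => u (i + j)) := (summable_nat_add_iff j).2 hsumu
    have e1 : h j = (b - a) * ((a + j) * ∑' i : ℕ, f (i + j)) := by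
      rw [tailf j, hag j]
      field_simp
    rw [e1]
    apply mul_le_mul_of_nonneg_left ?_ hba.le
    rw [← tsum_mul_left]
    apply Summable.tsum_le_tsum ?_ (hshift.mul_left _) hshiftu
    intro i
    have e2 : u (i + j) = (a + ((i + j : ℕ):ℝ)) * f (i + j) := rfl
    rw [e2]
    apply mul_le_mul_of_nonneg_right ?_ (hfpos _).le
    push_cast
    linarith [Nat.cast_nonneg (α := ℝ) i]
  have hh0 : Tendsto h atTop (nhds 0) := by
    apply squeeze_zero (fun j => (hhpos j).le) key
    have := (tendsto_sum_nat_add u).const_mul (b - a)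
    simpa using this
  -- HasSum for u
  have psu' : ∀ N, ∑ j ∈ Finset.range N, u j = (h 0 - h N) / (b - a - 1) := by
    intro N
    rw [eq_div_iff hba1.ne']
    linear_combination psu N
  have hasu : HasSum u (h 0 / (b - a - 1)) := by
    rw [hsumu.hasSum_iff_tendsto_nat]
    have ht : Tendsto (fun N => (h 0 - h N) / (b - a - 1)) atTop (nhds ((h 0 - 0) / (b - a - 1))) :=
      (tendsto_const_nhds.sub hh0).div_const _
    rw [sub_zero] at ht
    exact ht.congr fun N => (psu' N).symm
  constructor
  · have e : g 0 = Real.Gamma a / Real.Gamma b := by simp [hgdef]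
    rwa [e] at hasf
  · have e : h 0 = a * Real.Gamma a / Real.Gamma b := by
      simp only [hhdef, Nat.cast_zero, add_zero]
      rw [Real.Gamma_add_one (ne_of_gt ha)]
    rwa [e] at hasu

/-- Limiting degree distribution of the affine preferential attachment model. -/
noncomputable def pdeg (m : ℕ) (δ : ℝ) (k : ℕ) : ℝ :=
  (2 + δ / m) * (Real.Gamma (k + δ) * Real.Gamma (m + 2 + δ + δ / m)) /
    (Real.Gamma (m + δ) * Real.Gamma (k + 3 + δ + δ / m))

theorem stmt_10 (m : ℕ) (hm : 1 ≤ m) (δ₀ : ℝ) (hδ : -(m : ℝ) < δ₀) :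
    HasSum (fun j : ℕ => ((m + j : ℕ) : ℝ) * pdeg m δ₀ (m + j)) (2 * m) ∧
    HasSum (fun j : ℕ => (((m + j : ℕ) : ℝ) + δ₀) * pdeg m δ₀ (m + j)) (2 * m + δ₀) := by
  have hm0 : (0:ℝ) < m := by exact_mod_cast hm
  have hc : -1 < δ₀ / m := by
    rw [lt_div_iff₀ hm0]
    linarith
  set a : ℝ := (m:ℝ) + δ₀ with hadef
  set b : ℝ := (m:ℝ) + 2 + δ₀ + δ₀ / m with hbdef
  have ha : 0 < a := by simp only [hadef]; linarith
  have hab : a + 1 < b := by simp only [hadef, hbdef]; linarith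
  obtain ⟨H1, H2⟩ := gamma_key a b ha hab
  have hΓa : 0 < Real.Gamma a := Real.Gamma_pos_of_pos ha
  have hΓb : 0 < Real.Gamma b := Real.Gamma_pos_of_pos (by linarith)
  set K : ℝ := (2 + δ₀ / m) * Real.Gamma b / Real.Gamma a with hKdef
  have hpdeg : ∀ j : ℕ, pdeg m δ₀ (m + j) = K * (Real.Gamma (a + j) / Real.Gamma (b + j + 1)) := by
    intro j
    have e1 : ((m + j : ℕ) : ℝ) + δ₀ = a + j := by push_cast; ring
    have e2 : (m:ℝ) + 2 + δ₀ + δ₀ / m = b := rfl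
    have e3 : ((m + j : ℕ) : ℝ) + 3 + δ₀ + δ₀ / m = b + j + 1 := by
      simp only [hbdef]; push_cast; ring
    rw [pdeg, e1, e2, e3, hKdef]
    ring
  -- first sums
  have HA : HasSum (fun j : ℕ => K * (a + j) * (Real.Gamma (a + j) / Real.Gamma (b + j + 1)))
      (K * (a * Real.Gamma a / Real.Gamma b / (b - a - 1))) := by
    have := H2.mul_left K
    simpa [mul_assoc] using this
  have HB : HasSum (fun j : ℕ => K * (Real.Gamma (a + j) / Real.Gamma (b + j + 1)))
      (K * (Real.Gamma a / Real.Gamma b / (b - a))) := H1.mul_left K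
  have hval2 : K * (a * Real.Gamma a / Real.Gamma b / (b - a - 1)) = 2 * m + δ₀ := by
    have hba1 : b - a - 1 = 1 + δ₀ / m := by simp only [hadef, hbdef]; ring
    rw [hKdef, hba1]
    have h1 : (1:ℝ) + δ₀ / m ≠ 0 := by linarith
    field_simp
    have h2 : (m:ℝ) + δ₀ ≠ 0 := by linarith
    rw [hadef]
    field_simp
  have hval1 : K * (Real.Gamma a / Real.Gamma b / (b - a)) = 1 := by
    have hba : b - a = 2 + δ₀ / m := by simp only [hadef, hbdef]; ring
    rw [hKdef, hba]
    have h1 : (2:ℝ) + δ₀ / m ≠ 0 := by linarith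
    have h2 : (0:ℝ) < 2 * m + δ₀ := by linarith
    field_simp
    try ring
  constructor
  · have := (hval2 ▸ HA).sub ((hval1 ▸ HB).mul_left δ₀)
    have e : (fun j : ℕ => K * (a + j) * (Real.Gamma (a + j) / Real.Gamma (b + j + 1)) -
        δ₀ * (K * (Real.Gamma (a + j) / Real.Gamma (b + j + 1)))) =
        fun j : ℕ => ((m + j : ℕ) : ℝ) * pdeg m δ₀ (m + j) := by
      funext j
      rw [hpdeg j]
      push_cast [hadef]
      ring
    rw [e] at this
    have e2 : (2 * (m:ℝ) + δ₀ - δ₀ * 1) = 2 * m := by ring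
    rwa [e2] at this
  · have := hval2 ▸ HA
    have e : (fun j : ℕ => K * (a + j) * (Real.Gamma (a + j) / Real.Gamma (b + j + 1))) =
        fun j : ℕ => (((m + j : ℕ) : ℝ) + δ₀) * pdeg m δ₀ (m + j) := by
      funext j
      rw [hpdeg j]
      push_cast [hadef]
      ring
    rwa [e] at this
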